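/- For every $d > 0$ and every $x \in (-\infty, d]$, $e^x \le \frac{d+x}{2d}e^d + \frac{d-x}{2d}e^{-d} - \frac{\sinh(d) - d e^{-d}}{2}\left(1 - \frac{x^2}{d^2}\right)$. -/

import Mathlib

/-- parabolic upper bound on the exponential function over `(-∞, d]`. -/
theorem stmt_9 (d x : ℝ) (hd : 0 < d) (hx : x ≤ d) :
    Real.exp x ≤ (d + x) / (2 * d) * Real.exp d + (d - x) / (2 * d) * Real.exp (-d)
      - (Real.sinh d - d * Real.exp (-d)) / 2 * (1 - x ^ 2 / d ^ 2) := by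
  have hd0 : d ≠ 0 := hd.ne'
  set c : ℝ := (Real.sinh d - d * Real.exp (-d)) / 2 with hc
  set A : ℝ := (Real.exp d + Real.exp (-d)) / 2 - c with hA
  set B : ℝ := Real.sinh d / d with hB
  set C : ℝ := c / d ^ 2 with hC
  set G : ℝ → ℝ := fun y => A + B * y + C * y ^ 2 - Real.exp y with hG
  set D1 : ℝ → ℝ := fun y => B + 2 * C * y - Real.exp y with hD1
  have hEe : Real.exp d * Real.exp (-d) = 1 := by
    rw [← Real.exp_add]; simp
  -- c > 0
  have hcpos : 0 < c := by
    have h1 : d < Real.sinh d := Real.self_lt_sinh_iff.mpr hd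
    have h2 : Real.exp (-d) < 1 := Real.exp_lt_one_iff.mpr (by linarith)
    have h3 : d * Real.exp (-d) < d := by nlinarith
    rw [hc]; linarith
  have hCpos : 0 < C := div_pos hcpos (by positivity)
  -- exp(-d) ≤ 2C
  have hquad : 1 + 2 * d + 2 * d ^ 2 ≤ Real.exp (2 * d) := by
    have h := Real.sum_le_exp_of_nonneg (by linarith : (0:ℝ) ≤ 2 * d) 3
    simp [Finset.sum_range_succ] at h
    nlinarith [h]
  have hCe : Real.exp (-d) ≤ 2 * C := by
    have hexp2 : Real.exp (2 * d) = Real.exp d * Real.exp d := by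
      rw [← Real.exp_add]; ring_nf
    have key : Real.exp (-d) * d ^ 2 ≤ 2 * c := by
      rw [hc, Real.sinh_eq]
      nlinarith [Real.exp_pos d, Real.exp_pos (-d), hquad, hexp2, hEe]
    rw [hC, ← mul_div_assoc]
    exact (le_div_iff₀ (by positivity)).mpr key
  -- tangent line at -d
  have htan : ∀ y : ℝ, Real.exp (-d) * (y + d + 1) ≤ Real.exp y := by
    intro y
    have h := Real.add_one_le_exp (y + d)
    have h2 : Real.exp (-d) * Real.exp (y + d) = Real.exp y := by
      rw [← Real.exp_add]; ring_nf
    nlinarith [Real.exp_pos (-d)]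
  -- B - 2Cd = exp(-d)
  have hB2C : B - 2 * C * d = Real.exp (-d) := by
    rw [hB, hC, hc, Real.sinh_eq]; field_simp; ring
  -- boundary values
  have hGd : G d = 0 := by
    simp only [hG, hA, hB, hC, hc, Real.sinh_eq]; field_simp; ring
  have hGnd : G (-d) = 0 := by
    simp only [hG, hA, hB, hC, hc, Real.sinh_eq]; field_simp; ring
  -- derivatives
  have hGderiv : ∀ y : ℝ, HasDerivAt G (D1 y) y := by
    intro y
    have h := (((hasDerivAt_const y A).add ((hasDerivAt_id y).const_mul B)).add
      ((hasDerivAt_pow 2 y).const_mul C)).sub (Real.hasDerivAt_exp y)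
    refine h.congr_deriv ?_
    simp only [hD1]; push_cast; ring
  have hD1deriv : ∀ y : ℝ, HasDerivAt D1 (2 * C - Real.exp y) y := by
    intro y
    have h := (((hasDerivAt_const y B).add ((hasDerivAt_id y).const_mul (2 * C))).sub
      (Real.hasDerivAt_exp y))
    refine h.congr_deriv ?_
    ring
  have hGcont : Continuous G := by
    simp only [hG]; fun_prop
  have hD1cont : Continuous D1 := by
    simp only [hD1]; fun_prop
  have hderivG : deriv G = D1 := funext fun y => (hGderiv y).deriv
  have hderivD1 : deriv D1 = fun y => 2 * C - Real.exp y := funext fun y => (hD1deriv y).deriv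
  -- reduce to 0 ≤ G x
  suffices hsuff : 0 ≤ G x by
    have heq : (d + x) / (2 * d) * Real.exp d + (d - x) / (2 * d) * Real.exp (-d)
        - c * (1 - x ^ 2 / d ^ 2) = A + B * x + C * x ^ 2 := by
      rw [hA, hB, hC, hc, Real.sinh_eq]; field_simp; ring
    simp only [hG] at hsuff
    rw [heq] at *
    linarith
  rcases le_or_gt x (-d) with hxa | hxb
  · -- Region x ≤ -d : G antitone there
    have hD1nonpos : ∀ y ∈ Set.Iic (-d), D1 y ≤ 0 := by
      intro y hy
      simp only [Set.mem_Iic] at hy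
      have ht := htan y
      have hp : (2 * C - Real.exp (-d)) * (y + d) ≤ 0 :=
        mul_nonpos_of_nonneg_of_nonpos (by linarith) (by linarith)
      simp only [hD1]
      nlinarith
    have hanti : AntitoneOn G (Set.Iic (-d)) := by
      apply antitoneOn_of_deriv_nonpos (convex_Iic _) hGcont.continuousOn
        (fun y _ => (hGderiv y).differentiableAt.differentiableWithinAt)
      intro y hy
      rw [hderivG]
      rw [interior_Iic] at hy
      exact hD1nonpos y (Set.mem_Iic.2 (le_of_lt (Set.mem_Iio.1 hy)))
    have := hanti (Set.mem_Iic.2 hxa) (Set.mem_Iic.2 (le_refl (-d))) hxa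
    rw [hGnd] at this
    exact this
  · -- Region -d < x ≤ d
    have hxnd : -d ≤ x := hxb.le
    set m : ℝ := min (Real.log (2 * C)) d with hm
    have hm1 : -d ≤ m := by
      apply le_min _ (by linarith)
      exact (Real.le_log_iff_exp_le (by positivity)).mpr hCe
    have hm2 : m ≤ d := min_le_right _ _
    -- D1 ≥ 0 on [-d, m]
    have hD10 : D1 (-d) = 0 := by
      simp only [hD1]; linear_combination hB2C
    have hmono1 : MonotoneOn D1 (Set.Icc (-d) m) := by
      apply monotoneOn_of_deriv_nonneg (convex_Icc _ _) hD1cont.continuousOn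
        (fun y _ => (hD1deriv y).differentiableAt.differentiableWithinAt)
      intro y hy
      rw [hderivD1]
      rw [interior_Icc] at hy
      have hym : y ≤ Real.log (2 * C) := le_trans hy.2.le (min_le_left _ _)
      have : Real.exp y ≤ 2 * C := by
        calc Real.exp y ≤ Real.exp (Real.log (2 * C)) := Real.exp_le_exp.2 hym
        _ = 2 * C := Real.exp_log (by positivity)
      simp; linarith
    have hD1nn : ∀ y ∈ Set.Icc (-d) m, 0 ≤ D1 y := by
      intro y hy
      have := hmono1 (Set.left_mem_Icc.2 hm1) hy hy.1
      rw [hD10] at this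
      exact this
    -- G monotone on [-d, m]
    have hmono2 : MonotoneOn G (Set.Icc (-d) m) := by
      apply monotoneOn_of_deriv_nonneg (convex_Icc _ _) hGcont.continuousOn
        (fun y _ => (hGderiv y).differentiableAt.differentiableWithinAt)
      intro y hy
      rw [hderivG]
      rw [interior_Icc] at hy
      exact hD1nn y ⟨hy.1.le, hy.2.le⟩
    have hstep : ∀ y ∈ Set.Icc (-d) m, 0 ≤ G y := by
      intro y hy
      have := hmono2 (Set.left_mem_Icc.2 hm1) hy hy.1
      rw [hGnd] at this
      exact this
    rcases le_or_gt x m with hxm | hmx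
    · exact hstep x ⟨hxnd, hxm⟩
    · -- concon [m, d]
      have hconc : ConcaveOn ℝ (Set.Icc m d) G := by
        apply concaveOn_of_deriv2_nonpos (convex_Icc _ _) hGcont.continuousOn
          (fun y _ => ((hGderiv y).differentiableAt.differentiableWithinAt))
          (by rw [hderivG]; exact fun y _ => (hD1deriv y).differentiableAt.differentiableWithinAt)
        intro y hy
        rw [interior_Icc] at hy
        have hmd : m < d := lt_trans hy.1 hy.2
        have hlog : Real.log (2 * C) < d := by
          by_contra h
          push_neg at h
          rw [hm, min_eq_right h] at hmd
          exact lt_irrefl _ hmd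
        have hmeq : m = Real.log (2 * C) := min_eq_left hlog.le
        have h2C : 2 * C < Real.exp y := by
          calc 2 * C = Real.exp (Real.log (2 * C)) := (Real.exp_log (by positivity)).symm
          _ < Real.exp y := Real.exp_lt_exp.2 (hmeq ▸ hy.1)
        have h2 : deriv^[2] G y = 2 * C - Real.exp y := by
          simp only [Function.iterate_succ, Function.iterate_zero, Function.comp_apply, id_eq]
          rw [hderivG, hderivD1]
        rw [h2]
        linarith
      have hGm : 0 ≤ G m := hstep m ⟨hm1, le_refl m⟩
      have hxseg : x ∈ segment ℝ m d := by
        rw [segment_eq_Icc hm2]; exact ⟨hmx.le, hx⟩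
      have := hconc.ge_on_segment (Set.left_mem_Icc.2 hm2) (Set.right_mem_Icc.2 hm2) hxseg
      rw [hGd] at this
      exact le_trans (le_min hGm (le_refl 0)) this
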